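/- Let $c(n)$ be the number of compositions of $n$ (so $c(0)=1$ and $c(n)=2^{n-1}$ for $n\ge 1$). Then $\sum_{n\ge 0} c(n) q^n = \prod_{n\ge 1} (1-q^n)^{-a_n}$ where $a_n = \frac{1}{n} \sum_{d \mid n} \mu(n/d)(2^d - 1)$. -/

import Mathlib

open Finset PowerSeries ArithmeticFunction
open scoped ArithmeticFunction.Moebius

/-- The rising factorial `(a)_k = a(a+1)⋯(a+k-1)`. -/
noncomputable def risingFact (a : ℝ) (k : ℕ) : ℝ := ∏ j ∈ Finset.range k, (a + j)

/-- The binomial-series expansion of `(1-q^n)^{-a n}`. -/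
noncomputable def binomFactor (a : ℕ → ℝ) (n : ℕ) : PowerSeries ℝ :=
  PowerSeries.mk fun k =>
    if n ∣ k then risingFact (a n) (k / n) / (Nat.factorial (k / n)) else 0

lemma coeff_binomFactor (a : ℕ → ℝ) (n k : ℕ) :
    PowerSeries.coeff k (binomFactor a n) =
      if n ∣ k then risingFact (a n) (k / n) / (Nat.factorial (k / n)) else 0 := by
  simp [binomFactor]

lemma risingFact_succ (x : ℝ) (k : ℕ) : risingFact x (k + 1) = risingFact x k * (x + k) := by
  simp [risingFact, Finset.prod_range_succ]

/-- The key recurrence  `(k+1) * r (k+1) = (x + k) * r k` for `r k = (x)_k / k!`. -/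
lemma risingFact_ratio (x : ℝ) (k : ℕ) :
    ((k : ℝ) + 1) * (risingFact x (k + 1) / (Nat.factorial (k + 1))) =
      (x + k) * (risingFact x k / (Nat.factorial k)) := by
  rw [risingFact_succ, Nat.factorial_succ]
  have hk : (Nat.factorial k : ℝ) ≠ 0 := Nat.cast_ne_zero.mpr (Nat.factorial_ne_zero k)
  have hk1 : ((k : ℝ) + 1) ≠ 0 := by positivity
  push_cast
  field_simp

/-- `geomPow n = 1 + X^n + X^(2n) + ⋯`, the inverse of `1 - X^n`. -/
noncomputable def geomPow (n : ℕ) : PowerSeries ℝ :=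
  PowerSeries.mk fun k => if n ∣ k then 1 else 0

lemma geomPow_mul (n : ℕ) (hn : 1 ≤ n) : ((1 : ℝ⟦X⟧) - X ^ n) * geomPow n = 1 := by
  ext m
  rw [sub_mul, one_mul, map_sub, PowerSeries.coeff_X_pow_mul', PowerSeries.coeff_one]
  simp only [geomPow, coeff_mk]
  rcases eq_or_ne m 0 with rfl | hm
  · have : ¬ n ≤ 0 := by omega
    simp [this]
  · rw [if_neg hm]
    by_cases hle : n ≤ m
    · rw [if_pos hle]
      have hiff : n ∣ m - n ↔ n ∣ m := by
        constructor
        · intro h; have := Nat.dvd_add h (dvd_refl n); rwa [Nat.sub_add_cancel hle] at this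
        · intro h; exact Nat.dvd_sub h (dvd_refl n)
      by_cases hd : n ∣ m
      · rw [if_pos hd, if_pos (hiff.mpr hd)]; ring
      · rw [if_neg hd, if_neg (fun h => hd (hiff.mp h))]; ring
    · rw [if_neg hle]
      have hd : ¬ n ∣ m := fun h => hle (Nat.le_of_dvd (Nat.pos_of_ne_zero hm) h)
      rw [if_neg hd]; ring

lemma coeff_derivativeFun' (f : ℝ⟦X⟧) (n : ℕ) :
    PowerSeries.coeff n (PowerSeries.derivativeFun f) = PowerSeries.coeff (n + 1) f * (n + 1) :=
  PowerSeries.coeff_derivative f n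

/-- The ODE `(1 - X^n) f' = a n * n * X^(n-1) * f` for `f = binomFactor a n`. -/
lemma binom_ode (a : ℕ → ℝ) (n : ℕ) (hn : 1 ≤ n) :
    ((1 : ℝ⟦X⟧) - X ^ n) * PowerSeries.derivativeFun (binomFactor a n) =
      PowerSeries.C (a n * n) * ((X : ℝ⟦X⟧) ^ (n - 1) * binomFactor a n) := by
  ext m
  rw [sub_mul, one_mul, map_sub]
  simp only [coeff_derivativeFun', PowerSeries.coeff_X_pow_mul',
    PowerSeries.coeff_C_mul, coeff_binomFactor]
  by_cases hd : n ∣ (m + 1)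
  · obtain ⟨k', hk'⟩ := hd
    have hk'pos : 1 ≤ k' := by
      rcases Nat.eq_zero_or_pos k' with h | h
      · subst h; omega
      · exact h
    obtain ⟨k, rfl⟩ : ∃ k, k' = k + 1 := ⟨k' - 1, by omega⟩
    have hm' : m + 1 = n * k + n := by rw [hk']; ring
    have hq1 : (m + 1) / n = k + 1 := by rw [hk', Nat.mul_div_cancel_left _ (by omega)]
    have hdd : n ∣ m + 1 := ⟨k + 1, hk'⟩
    have hnm1 : n - 1 ≤ m := by omega
    have hmn1 : m - (n - 1) = n * k := by omega
    have hdk : n ∣ m - (n - 1) := by rw [hmn1]; exact ⟨k, rfl⟩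
    have hqk : (m - (n - 1)) / n = k := by rw [hmn1, Nat.mul_div_cancel_left _ (by omega)]
    rw [if_pos hdd, hq1, if_pos hnm1, if_pos hdk, hqk]
    by_cases hk0 : k = 0
    · subst hk0
      have hnotle : ¬ n ≤ m := by omega
      rw [if_neg hnotle]
      have h1 : risingFact (a n) (0 + 1) = a n := by simp [risingFact]
      have h0 : risingFact (a n) 0 = 1 := by simp [risingFact]
      rw [h1, h0]
      have hcast : ((m : ℝ) + 1) = (n : ℝ) := by
        have : ((m + 1 : ℕ) : ℝ) = ((n * (0 + 1) : ℕ) : ℝ) := by rw [hk']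
        push_cast at this; linarith
      rw [hcast]
      norm_num
    · have hnk : 1 ≤ n * k := Nat.mul_pos (by omega) (by omega)
      have hle : n ≤ m := by omega
      have hmn : m - n + 1 = n * k := by omega
      have hdk2 : n ∣ m - n + 1 := by rw [hmn]; exact ⟨k, rfl⟩
      have hqk2 : (m - n + 1) / n = k := by rw [hmn, Nat.mul_div_cancel_left _ (by omega)]
      rw [if_pos hle, if_pos hdk2, hqk2]
      have key := risingFact_ratio (a n) k
      have hm1 : ((m : ℝ) + 1) = (n : ℝ) * ((k : ℝ) + 1) := by
        have : ((m + 1 : ℕ) : ℝ) = ((n * (k + 1) : ℕ) : ℝ) := by rw [hk']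
        push_cast at this; linarith
      have hmn' : ((m - n : ℕ) : ℝ) + 1 = (n : ℝ) * (k : ℝ) := by
        have : ((m - n + 1 : ℕ) : ℝ) = ((n * k : ℕ) : ℝ) := by rw [hmn]
        push_cast at this; linarith
      rw [hm1, hmn']
      linear_combination (n : ℝ) * key
  · rw [if_neg hd]
    have haux : ∀ j : ℕ, j = m + 1 - n → n ≤ m + 1 → ¬ n ∣ j := by
      rintro j rfl hle h2
      apply hd
      have := Nat.dvd_add h2 (dvd_refl n)
      rwa [Nat.sub_add_cancel hle] at this
    by_cases h1 : n ≤ m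
    · have hnd1 : ¬ n ∣ m - n + 1 := haux _ (by omega) (by omega)
      rw [if_pos h1, if_neg hnd1]
      have h3 : n - 1 ≤ m := by omega
      have hnd2 : ¬ n ∣ m - (n - 1) := haux _ (by omega) (by omega)
      rw [if_pos h3, if_neg hnd2]
      ring
    · rw [if_neg h1]
      by_cases h3 : n - 1 ≤ m
      · have hnd2 : ¬ n ∣ m - (n - 1) := haux _ (by omega) (by omega)
        rw [if_pos h3, if_neg hnd2]
        ring
      · rw [if_neg h3]
        ring

lemma binom_deriv (a : ℕ → ℝ) (n : ℕ) (hn : 1 ≤ n) :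
    PowerSeries.derivativeFun (binomFactor a n) =
      (PowerSeries.C (a n * n) * ((X : ℝ⟦X⟧) ^ (n - 1) * geomPow n)) * binomFactor a n := by
  have h := binom_ode a n hn
  have hg := geomPow_mul n hn
  calc PowerSeries.derivativeFun (binomFactor a n)
      = (geomPow n * ((1 : ℝ⟦X⟧) - X ^ n)) * PowerSeries.derivativeFun (binomFactor a n) := by
        rw [mul_comm (geomPow n), hg, one_mul]
    _ = geomPow n * (PowerSeries.C (a n * n) * ((X : ℝ⟦X⟧) ^ (n - 1) * binomFactor a n)) := by
        rw [mul_assoc, h]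
    _ = _ := by ring

/-- Derivative of a finite product, given each factor satisfies `f' = t * f`. -/
lemma derivativeFun_prod (s : Finset ℕ) (f t : ℕ → ℝ⟦X⟧)
    (h : ∀ n ∈ s, PowerSeries.derivativeFun (f n) = t n * f n) :
    PowerSeries.derivativeFun (∏ n ∈ s, f n) = (∑ n ∈ s, t n) * ∏ n ∈ s, f n := by
  induction s using Finset.cons_induction with
  | empty => simp [PowerSeries.derivativeFun_one]
  | cons i s his ih =>
    rw [Finset.prod_cons, PowerSeries.derivativeFun_mul, Finset.sum_cons,
      ih (fun n hn => h n (Finset.mem_cons_of_mem hn)), h i (Finset.mem_cons_self i s)]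
    simp only [smul_eq_mul]
    ring

/-- If `f ≡ 1` up to degree `k`, multiplying by `f` does not change the `k`-th coefficient. -/
lemma coeff_mul_of_trivial (P f : ℝ⟦X⟧) (k : ℕ) (hf0 : PowerSeries.coeff 0 f = 1)
    (hf : ∀ j, 0 < j → j ≤ k → PowerSeries.coeff j f = 0) :
    PowerSeries.coeff k (P * f) = PowerSeries.coeff k P := by
  rw [PowerSeries.coeff_mul, Finset.sum_eq_single (k, 0)]
  · rw [hf0, mul_one]
  · rintro ⟨i, j⟩ hb hne
    rw [Finset.HasAntidiagonal.mem_antidiagonal] at hb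
    have hj : 0 < j := by
      rcases Nat.eq_zero_or_pos j with hj0 | hj0
      · exfalso; apply hne; subst hj0; simp at hb ⊢; omega
      · exact hj0
    rw [hf j hj (by omega), mul_zero]
  · intro habs
    exact absurd (Finset.HasAntidiagonal.mem_antidiagonal.mpr (by omega)) habs

lemma coeff_prod_stable (a : ℕ → ℝ) (k N M : ℕ) (hk : k ≤ N) (hNM : N ≤ M) :
    PowerSeries.coeff k (∏ n ∈ Finset.Icc 1 M, binomFactor a n) =
      PowerSeries.coeff k (∏ n ∈ Finset.Icc 1 N, binomFactor a n) := by
  induction M, hNM using Nat.le_induction with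
  | base => rfl
  | succ M hNM ih =>
    rw [← ih]
    have hIcc : Finset.Icc 1 (M + 1) = insert (M + 1) (Finset.Icc 1 M) :=
      Finset.ext fun x => by simp only [Finset.mem_Icc, Finset.mem_insert]; omega
    rw [hIcc, Finset.prod_insert (by simp), mul_comm]
    apply coeff_mul_of_trivial
    · simp [coeff_binomFactor, risingFact]
    · intro j hj hjk
      rw [coeff_binomFactor, if_neg]
      intro hdvd
      have := Nat.le_of_dvd hj hdvd
      omega

lemma coeff_summand (a : ℕ → ℝ) (n i : ℕ) (hn : 1 ≤ n) :
    PowerSeries.coeff i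
        (PowerSeries.C (a n * n) * ((X : ℝ⟦X⟧) ^ (n - 1) * geomPow n)) =
      if n ∈ (i + 1).divisors then (n : ℝ) * a n else 0 := by
  rw [PowerSeries.coeff_C_mul, PowerSeries.coeff_X_pow_mul']
  simp only [geomPow, coeff_mk, Nat.mem_divisors]
  by_cases hd : n ∣ (i + 1)
  · have hle : n ≤ i + 1 := Nat.le_of_dvd (Nat.succ_pos i) hd
    have h1 : n - 1 ≤ i := by omega
    have h2 : n ∣ i - (n - 1) := by
      have : i - (n - 1) = i + 1 - n := by omega
      rw [this]
      exact Nat.dvd_sub hd (dvd_refl n)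
    rw [if_pos h1, if_pos h2, if_pos ⟨hd, (by omega : i + 1 ≠ 0)⟩]
    ring
  · have hnd : ¬ (n ∣ i + 1 ∧ i + 1 ≠ 0) := fun h => hd h.1
    rw [if_neg hnd]
    by_cases h1 : n - 1 ≤ i
    · have h2 : ¬ n ∣ i - (n - 1) := by
        intro h2
        apply hd
        have he : i - (n - 1) = i + 1 - n := by omega
        rw [he] at h2
        have h3 := Nat.dvd_add h2 (dvd_refl n)
        rwa [Nat.sub_add_cancel (by omega)] at h3
      rw [if_pos h1, if_neg h2, mul_zero]
    · rw [if_neg h1, mul_zero]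

/-- The purely numeric sum identity. -/
lemma numeric_sum (m : ℕ) :
    ∑ k ∈ Finset.range (m + 1),
        ((2 : ℝ) ^ (k + 1) - 1) * (if k = m then 1 else 2 ^ (m - k - 1)) =
      ((m : ℝ) + 1) * 2 ^ m := by
  induction m with
  | zero => norm_num
  | succ m ih =>
    rw [Finset.sum_range_succ]
    have hstep : ∀ k ∈ Finset.range (m + 1),
        ((2 : ℝ) ^ (k + 1) - 1) * (if k = m + 1 then 1 else 2 ^ (m + 1 - k - 1)) =
        2 * (((2 : ℝ) ^ (k + 1) - 1) * (if k = m then 1 else 2 ^ (m - k - 1)))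
          - (if k = m then (2 : ℝ) ^ (m + 1) - 1 else 0) := by
      intro k hk
      rw [Finset.mem_range] at hk
      by_cases hkm : k = m
      · have h0 : m + 1 - k - 1 = 0 := by omega
        rw [if_neg (show ¬ k = m + 1 by omega), if_pos hkm, if_pos hkm, h0, hkm]
        ring
      · rw [if_neg (show ¬ k = m + 1 by omega), if_neg hkm, if_neg hkm]
        have h1 : m + 1 - k - 1 = (m - k - 1) + 1 := by omega
        rw [h1, pow_succ]
        ring
    rw [Finset.sum_congr rfl hstep, Finset.sum_sub_distrib, ← Finset.mul_sum, ih,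
      Finset.sum_ite_eq' (Finset.range (m + 1)) m (fun _ => (2 : ℝ) ^ (m + 1) - 1),
      if_pos (Finset.mem_range.mpr (by omega)), if_pos rfl]
    push_cast
    ring

theorem stmt10 (c : ℕ → ℝ) (hc0 : c 0 = 1) (hc : ∀ n : ℕ, 1 ≤ n → c n = 2 ^ (n - 1))
    (a : ℕ → ℝ)
    (ha : ∀ n : ℕ, 1 ≤ n →
      a n = (1 / (n : ℝ)) * ∑ d ∈ n.divisors, (μ (n / d) : ℝ) * (2 ^ d - 1)) :
    ∀ N : ℕ, PowerSeries.coeff N (∏ n ∈ Finset.Icc 1 N, binomFactor a n) = c N := by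
  -- Step 1: Möbius inversion
  have hsum : ∀ m : ℕ, 0 < m → ∑ d ∈ m.divisors, (d : ℝ) * a d = (2 : ℝ) ^ m - 1 := by
    have H := (ArithmeticFunction.sum_eq_iff_sum_mul_moebius_eq
      (R := ℝ) (f := fun d => (d : ℝ) * a d) (g := fun m => (2 : ℝ) ^ m - 1)).mpr
    intro m hm
    refine H ?_ m hm
    intro n hn
    rw [Nat.sum_divisorsAntidiagonal' (f := fun x y => (μ x : ℝ) * ((2 : ℝ) ^ y - 1))]
    rw [ha n hn]
    have hn0 : (n : ℝ) ≠ 0 := Nat.cast_ne_zero.mpr (by omega)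
    field_simp
  intro N
  induction N using Nat.strong_induction_on with
  | _ N ih =>
    rcases Nat.eq_zero_or_pos N with rfl | hN
    · simp [hc0]
    · obtain ⟨m, rfl⟩ : ∃ m, N = m + 1 := ⟨N - 1, by omega⟩
      set Q := ∏ n ∈ Finset.Icc 1 (m + 1), binomFactor a n with hQ
      have hQk : ∀ k, k ≤ m → PowerSeries.coeff k Q = c k := by
        intro k hk
        rw [hQ, coeff_prod_stable a k k (m + 1) le_rfl (by omega)]
        exact ih k (by omega)
      set t : ℕ → ℝ⟦X⟧ :=
        fun n => PowerSeries.C (a n * n) * ((X : ℝ⟦X⟧) ^ (n - 1) * geomPow n) with ht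
      have hderiv : PowerSeries.derivativeFun Q = (∑ n ∈ Finset.Icc 1 (m + 1), t n) * Q :=
        derivativeFun_prod _ _ _ (fun n hn => binom_deriv a n (Finset.mem_Icc.mp hn).1)
      have hL : PowerSeries.coeff m (PowerSeries.derivativeFun Q) =
          PowerSeries.coeff (m + 1) Q * ((m : ℝ) + 1) := by
        rw [coeff_derivativeFun']
      have hT : ∀ i, i ≤ m →
          PowerSeries.coeff i (∑ n ∈ Finset.Icc 1 (m + 1), t n) = (2 : ℝ) ^ (i + 1) - 1 := by
        intro i hi
        rw [map_sum]
        have h1 : ∀ n ∈ Finset.Icc 1 (m + 1), PowerSeries.coeff i (t n) =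
            if n ∈ (i + 1).divisors then (n : ℝ) * a n else 0 :=
          fun n hn => coeff_summand a n i (Finset.mem_Icc.mp hn).1
        rw [Finset.sum_congr rfl h1, Finset.sum_ite_mem, Finset.inter_eq_right.mpr ?sub,
          hsum (i + 1) (Nat.succ_pos i)]
        case sub =>
          intro d hd
          rw [Nat.mem_divisors] at hd
          rw [Finset.mem_Icc]
          have h2 := Nat.le_of_dvd (Nat.succ_pos i) hd.1
          have h3 := Nat.pos_of_dvd_of_pos hd.1 (Nat.succ_pos i)
          omega
      have hR : PowerSeries.coeff m ((∑ n ∈ Finset.Icc 1 (m + 1), t n) * Q) =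
          ∑ k ∈ Finset.range (m + 1), ((2 : ℝ) ^ (k + 1) - 1) * c (m - k) := by
        rw [PowerSeries.coeff_mul, Finset.Nat.sum_antidiagonal_eq_sum_range_succ_mk]
        refine Finset.sum_congr rfl fun k hk => ?_
        rw [Finset.mem_range] at hk
        rw [hT k (by omega), hQk (m - k) (by omega)]
      have hcval : ∀ k ∈ Finset.range (m + 1),
          ((2 : ℝ) ^ (k + 1) - 1) * c (m - k) =
            ((2 : ℝ) ^ (k + 1) - 1) * (if k = m then 1 else 2 ^ (m - k - 1)) := by
        intro k hk
        rw [Finset.mem_range] at hk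
        by_cases hkm : k = m
        · subst hkm; simp [hc0]
        · rw [if_neg hkm, hc (m - k) (by omega)]
      have hfinal : PowerSeries.coeff (m + 1) Q * ((m : ℝ) + 1) = ((m : ℝ) + 1) * 2 ^ m := by
        rw [← hL, hderiv, hR, Finset.sum_congr rfl hcval, numeric_sum m]
      have hne : ((m : ℝ) + 1) ≠ 0 := by positivity
      have hval : PowerSeries.coeff (m + 1) Q = 2 ^ m :=
        mul_right_cancel₀ hne (by rw [hfinal]; ring)
      rw [hval, hc (m + 1) (by omega), Nat.add_sub_cancel]
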